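/- arXiv:2304.14961 — 4 statements merged into one kernel-verified Lean document; each statement's English description precedes it below -/
import Mathlib

section
/- For every real p×q matrix B and every real number s ≥ 0, the symmetric block matrix [[s·I_p, B], [Bᵀ, s·I_q]] is positive semidefinite if and only if the matrix s²·I_q − Bᵀ B is positive semidefinite. -/
open Matrix

private lemma dp_self_nonneg {k : ℕ} (v : Fin k → ℝ) : 0 ≤ v ⬝ᵥ v := by
  simpa using dotProduct_star_self_nonneg v

private lemma herm_smul {n : ℕ} (c : ℝ) {M : Matrix (Fin n) (Fin n) ℝ}
    (h : M.IsHermitian) : (c • M).IsHermitian := by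
  rw [Matrix.IsHermitian, Matrix.conjTranspose_smul, star_trivial, h.eq]

private lemma psd_smul_iff {n : ℕ} {c : ℝ} (hc : 0 < c) (M : Matrix (Fin n) (Fin n) ℝ) :
    (c • M).PosSemidef ↔ M.PosSemidef := by
  rw [Matrix.posSemidef_iff_dotProduct_mulVec, Matrix.posSemidef_iff_dotProduct_mulVec]
  constructor <;> intro h <;> refine ⟨?_, fun x => ?_⟩
  · have h1 : (c • M)ᴴ = c • M := h.1
    rw [Matrix.conjTranspose_smul] at h1
    have h1' : c • Mᴴ = c • M := by simpa using h1
    exact smul_right_injective _ hc.ne' h1'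
  · have h2 := h.2 x
    rw [Matrix.smul_mulVec, dotProduct_smul, smul_eq_mul] at h2
    nlinarith [h2]
  · exact herm_smul c h.1
  · rw [Matrix.smul_mulVec, dotProduct_smul, smul_eq_mul]
    exact mul_nonneg hc.le (h.2 x)

private lemma eq_zero_of_mulVec_zero {p q : ℕ} {B : Matrix (Fin p) (Fin q) ℝ}
    (h : ∀ v, B *ᵥ v = 0) : B = 0 := by
  ext i j
  have := congrFun (h (Pi.single j 1)) i
  simpa [Matrix.mulVec_single] using this

private lemma dp_transpose {p q : ℕ} (B : Matrix (Fin p) (Fin q) ℝ) (v : Fin q → ℝ)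
    (w : Fin p → ℝ) : v ⬝ᵥ (Bᵀ *ᵥ w) = (B *ᵥ v) ⬝ᵥ w := by
  rw [Matrix.dotProduct_mulVec, Matrix.vecMul_transpose]

private lemma posDef_smul_one {n : ℕ} {s : ℝ} (hs : 0 < s) :
    (s • (1 : Matrix (Fin n) (Fin n) ℝ)).PosDef := by
  rw [Matrix.posDef_iff_dotProduct_mulVec]
  refine ⟨herm_smul s Matrix.isHermitian_one, fun x hx => ?_⟩
  rw [Matrix.smul_mulVec, Matrix.one_mulVec, dotProduct_smul, smul_eq_mul,
    star_trivial]
  have : (0 : ℝ) < x ⬝ᵥ x := by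
    rcases lt_or_eq_of_le (dp_self_nonneg x) with h | h
    · exact h
    · exact absurd (dotProduct_self_eq_zero.mp h.symm) hx
  positivity

/-- For every real `p × q` matrix `B` and every real `s ≥ 0`, the symmetric
block matrix `[[s·I_p, B], [Bᵀ, s·I_q]]` is positive semidefinite if and only if
`s²·I_q − Bᵀ B` is positive semidefinite. -/
theorem stmt5 {p q : ℕ} (B : Matrix (Fin p) (Fin q) ℝ) (s : ℝ) (hs : 0 ≤ s) :
    (Matrix.fromBlocks (s • (1 : Matrix (Fin p) (Fin p) ℝ)) B
        Bᵀ (s • (1 : Matrix (Fin q) (Fin q) ℝ))).PosSemidef ↔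
    (s ^ 2 • (1 : Matrix (Fin q) (Fin q) ℝ) - Bᵀ * B).PosSemidef := by
  rcases hs.eq_or_lt with h0 | hpos
  · -- case s = 0
    subst h0
    simp only [zero_smul, ne_eq, OfNat.ofNat_ne_zero, not_false_eq_true, zero_pow, zero_sub]
    constructor
    · intro h
      have hB : B = 0 := by
        apply eq_zero_of_mulVec_zero
        intro v
        have h2 := (Matrix.posSemidef_iff_dotProduct_mulVec.mp h).2 (Sum.elim (-(B *ᵥ v)) v)
        rw [Matrix.fromBlocks_mulVec] at h2
        simp only [Sum.elim_comp_inl, Sum.elim_comp_inr, Matrix.zero_mulVec, zero_add,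
          add_zero, star_trivial] at h2
        rw [sumElim_dotProduct_sumElim, dp_transpose, neg_dotProduct,
          dotProduct_neg] at h2
        have hvv : (B *ᵥ v) ⬝ᵥ (B *ᵥ v) = 0 :=
          le_antisymm (by linarith) (dp_self_nonneg _)
        exact dotProduct_self_eq_zero.mp hvv
      rw [hB]
      simp only [Matrix.transpose_zero, Matrix.zero_mul, neg_zero]
      exact Matrix.PosSemidef.zero
    · intro h
      have hB : B = 0 := by
        apply eq_zero_of_mulVec_zero
        intro v
        have h2 := (Matrix.posSemidef_iff_dotProduct_mulVec.mp h).2 v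
        rw [star_trivial, Matrix.neg_mulVec, dotProduct_neg,
          ← Matrix.mulVec_mulVec, dp_transpose] at h2
        have hvv : (B *ᵥ v) ⬝ᵥ (B *ᵥ v) = 0 :=
          le_antisymm (by linarith) (dp_self_nonneg _)
        exact dotProduct_self_eq_zero.mp hvv
      rw [hB]
      simp only [Matrix.transpose_zero, Matrix.fromBlocks_zero]
      exact Matrix.PosSemidef.zero
  · -- case 0 < s
    have hA : (s • (1 : Matrix (Fin p) (Fin p) ℝ)).PosDef := posDef_smul_one hpos
    have hinv_eq : (s⁻¹ • (1 : Matrix (Fin p) (Fin p) ℝ)) * (s • (1 : Matrix (Fin p) (Fin p) ℝ))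
        = 1 := by
      rw [Matrix.smul_mul, Matrix.mul_smul, Matrix.one_mul, smul_smul,
        inv_mul_cancel₀ hpos.ne', one_smul]
    haveI : Invertible (s • (1 : Matrix (Fin p) (Fin p) ℝ)) :=
      invertibleOfLeftInverse _ _ hinv_eq
    have hBH : Bᴴ = Bᵀ := Matrix.conjTranspose_eq_transpose_of_trivial B
    rw [← hBH, Matrix.PosDef.fromBlocks₁₁ B _ hA]
    have hAinv : (s • (1 : Matrix (Fin p) (Fin p) ℝ))⁻¹ = s⁻¹ • 1 :=
      Matrix.inv_eq_left_inv hinv_eq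
    rw [hAinv, hBH]
    have key : s • (s • (1 : Matrix (Fin q) (Fin q) ℝ) -
        Bᵀ * (s⁻¹ • (1 : Matrix (Fin p) (Fin p) ℝ)) * B) =
        s ^ 2 • (1 : Matrix (Fin q) (Fin q) ℝ) - Bᵀ * B := by
      rw [Matrix.mul_smul, Matrix.mul_one, Matrix.smul_mul, smul_sub, smul_smul, smul_smul,
        mul_inv_cancel₀ hpos.ne', one_smul, sq]
    rw [← psd_smul_iff hpos, key]
end

section
/- Let G be a real symmetric n×n matrix and X a real m×n matrix. Then G = Xᵀ X if and only if both G − Xᵀ X is positive semidefinite and the rank of the block matrix [[I_m, X], [Xᵀ, G]] equals m. -/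
open Matrix Module

private lemma range_prodMap_aux {R M₁ M₂ M₃ M₄ : Type*} [CommRing R] [AddCommGroup M₁]
    [AddCommGroup M₂] [AddCommGroup M₃] [AddCommGroup M₄] [Module R M₁] [Module R M₂]
    [Module R M₃] [Module R M₄] (f : M₁ →ₗ[R] M₂) (g : M₃ →ₗ[R] M₄) :
    LinearMap.range (f.prodMap g) = (LinearMap.range f).prod (LinearMap.range g) := by
  ext ⟨x, y⟩
  simp only [LinearMap.mem_range, Submodule.mem_prod, LinearMap.prodMap_apply, Prod.mk.injEq,
    Prod.exists]
  constructor
  · rintro ⟨a, b, h1, h2⟩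
    exact ⟨⟨a, h1⟩, ⟨b, h2⟩⟩
  · rintro ⟨⟨a, h1⟩, ⟨b, h2⟩⟩
    exact ⟨a, b, h1, h2⟩

private lemma finrank_submodule_prod {K V W : Type*} [Field K] [AddCommGroup V] [AddCommGroup W]
    [Module K V] [Module K W] [FiniteDimensional K V] [FiniteDimensional K W]
    (p : Submodule K V) (q : Submodule K W) :
    finrank K (p.prod q) = finrank K p + finrank K q := by
  rw [LinearMap.prod_eq_sup_map]
  have h1 : Submodule.map (LinearMap.inl K V W) p ⊓ Submodule.map (LinearMap.inr K V W) q = ⊥ := by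
    rw [eq_bot_iff]
    rintro ⟨x, y⟩ ⟨⟨a, _, h⟩, ⟨b, _, h'⟩⟩
    simp only [LinearMap.inl_apply, Prod.mk.injEq] at h
    simp only [LinearMap.inr_apply, Prod.mk.injEq] at h'
    simp only [Submodule.mem_bot, Prod.mk_eq_zero]
    exact ⟨h'.1.symm, h.2.symm⟩
  have h2 := Submodule.finrank_sup_add_finrank_inf_eq
    (Submodule.map (LinearMap.inl K V W) p) (Submodule.map (LinearMap.inr K V W) q)
  rw [h1, finrank_bot, add_zero] at h2
  rw [h2]
  congr 1
  · exact ((Submodule.equivMapOfInjective _ LinearMap.inl_injective p).symm.finrank_eq)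
  · exact ((Submodule.equivMapOfInjective _ LinearMap.inr_injective q).symm.finrank_eq)

private lemma rank_fromBlocks_diag {m n p q : ℕ} (A : Matrix (Fin m) (Fin p) ℝ)
    (D : Matrix (Fin n) (Fin q) ℝ) :
    (fromBlocks A 0 0 D).rank = A.rank + D.rank := by
  set e₁ := LinearEquiv.sumArrowLequivProdArrow (Fin p) (Fin q) ℝ ℝ
  set e₂ := LinearEquiv.sumArrowLequivProdArrow (Fin m) (Fin n) ℝ ℝ
  have hM : (fromBlocks A 0 0 D).mulVecLin
      = (e₂.symm.toLinearMap.comp ((A.mulVecLin.prodMap D.mulVecLin).comp e₁.toLinearMap)) := by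
    apply LinearMap.ext
    intro v
    funext i
    cases i <;>
      simp [e₁, e₂, fromBlocks_mulVec, LinearEquiv.sumArrowLequivProdArrow, Equiv.sumArrowEquivProdArrow,
        Function.comp_def]
  rw [Matrix.rank, hM, LinearMap.range_comp, LinearEquiv.finrank_map_eq,
    LinearMap.range_comp_of_range_eq_top _ (LinearMap.range_eq_top.mpr e₁.surjective),
    range_prodMap_aux, finrank_submodule_prod, Matrix.rank, Matrix.rank]

private lemma rank_eq_zero_iff_mat {a b : ℕ} (S : Matrix (Fin a) (Fin b) ℝ) :
    S.rank = 0 ↔ S = 0 := by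
  constructor
  · intro h
    rw [Matrix.rank, Submodule.finrank_eq_zero] at h
    have hz : ∀ v, S *ᵥ v = 0 := by
      intro v
      have : S.mulVecLin v ∈ LinearMap.range S.mulVecLin := LinearMap.mem_range_self _ v
      rw [h, Submodule.mem_bot] at this
      exact this
    ext i j
    have := congrFun (hz (Pi.single j 1)) i
    simp [Matrix.mulVec_single] at this
    simpa using this
  · rintro rfl
    exact Matrix.rank_zero

/-- For a real symmetric `n × n` matrix `G` and a real `m × n` matrix `X`:
`G = Xᵀ X` if and only if `G − Xᵀ X ⪰ 0` and the rank of the block matrix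
`[[I_m, X], [Xᵀ, G]]` equals `m`. -/
theorem stmt7 {m n : ℕ} (G : Matrix (Fin n) (Fin n) ℝ) (hG : G.IsSymm)
    (X : Matrix (Fin m) (Fin n) ℝ) :
    G = Xᵀ * X ↔
      (G - Xᵀ * X).PosSemidef ∧
        (Matrix.fromBlocks (1 : Matrix (Fin m) (Fin m) ℝ) X Xᵀ G).rank = m := by
  set S := G - Xᵀ * X with hS
  have hQ : Matrix.fromBlocks (1 : Matrix (Fin m) (Fin m) ℝ) X Xᵀ G
      = (fromBlocks 1 X 0 1)ᵀ * fromBlocks 1 0 0 S * fromBlocks 1 X 0 1 := by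
    rw [fromBlocks_transpose, transpose_one, transpose_zero]
    rw [fromBlocks_multiply, fromBlocks_multiply]
    simp [hS]
  have hdet : IsUnit (fromBlocks (1 : Matrix (Fin m) (Fin m) ℝ) X 0 1).det := by
    rw [det_fromBlocks_zero₂₁]
    simp
  have hdetT : IsUnit ((fromBlocks (1 : Matrix (Fin m) (Fin m) ℝ) X 0 1)ᵀ).det := by
    rwa [det_transpose]
  have key : (Matrix.fromBlocks (1 : Matrix (Fin m) (Fin m) ℝ) X Xᵀ G).rank = m + S.rank := by
    rw [hQ, rank_mul_eq_left_of_isUnit_det _ _ hdet,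
      rank_mul_eq_right_of_isUnit_det _ _ hdetT, rank_fromBlocks_diag, Matrix.rank_one,
      Fintype.card_fin]
  constructor
  · intro h
    have hS0 : S = 0 := by rw [hS, h, sub_self]
    refine ⟨by rw [hS0]; exact Matrix.PosSemidef.zero, ?_⟩
    rw [key, hS0, Matrix.rank_zero, add_zero]
  · rintro ⟨-, hrank⟩
    rw [key] at hrank
    have h0 : S.rank = 0 := by omega
    have := (rank_eq_zero_iff_mat S).mp h0
    rw [hS, sub_eq_zero] at this
    exact this
end

section
/- Let X be a real symmetric n×n matrix with eigenvalues λ₁ ≥ λ₂ ≥ ... ≥ λ_n (listed in decreasing order with multiplicity), and let 0 ≤ j ≤ n. Then the infimum of tr(U X) over all real symmetric n×n matrices U satisfying U ⪰ 0, I_n − U ⪰ 0, and tr(U) = j, equals the sum of the j smallest eigenvalues λ_{n−j+1} + ... + λ_n of X. -/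
open Matrix

private lemma card_filter_le_val' {n a : ℕ} :
    (Finset.univ.filter (fun i : Fin n => a ≤ (i : ℕ))).card = n - a := by
  have h : ∀ m ∈ Finset.Ico a n, m < n := fun m hm => (Finset.mem_Ico.mp hm).2
  have he : (Finset.univ.filter (fun i : Fin n => a ≤ (i : ℕ))) = (Finset.Ico a n).attachFin h := by
    ext i
    simp [Finset.mem_attachFin, Finset.mem_Ico, i.isLt]
  rw [he, Finset.card_attachFin, Nat.card_Ico]

private lemma chi_sum' {n j : ℕ} (hj : j ≤ n) :
    ∑ i : Fin n, (if n - j ≤ (i : ℕ) then (1:ℝ) else 0) = j := by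
  rw [Finset.sum_boole, card_filter_le_val', Nat.sub_sub_self hj]

private lemma key_sum' {n j : ℕ} (hj : j ≤ n) (lam : Fin n → ℝ)
    (hdec : ∀ i k : Fin n, i ≤ k → lam k ≤ lam i)
    (u : Fin n → ℝ) (h0 : ∀ i, 0 ≤ u i) (h1 : ∀ i, u i ≤ 1)
    (hsum : ∑ i, u i = (j : ℝ)) :
    ∑ i ∈ Finset.univ.filter (fun i : Fin n => n - j ≤ (i : ℕ)), lam i ≤ ∑ i, u i * lam i := by
  set χ : Fin n → ℝ := fun i => if n - j ≤ (i : ℕ) then (1:ℝ) else 0 with hχ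
  have hfil : ∑ i ∈ Finset.univ.filter (fun i : Fin n => n - j ≤ (i : ℕ)), lam i
      = ∑ i : Fin n, χ i * lam i := by
    rw [Finset.sum_filter]
    refine Finset.sum_congr rfl fun i _ => ?_
    by_cases h : n - j ≤ (i : ℕ)
    · rw [if_pos h]; show lam i = (if n - j ≤ (i:ℕ) then (1:ℝ) else 0) * lam i
      rw [if_pos h, one_mul]
    · rw [if_neg h]; show (0:ℝ) = (if n - j ≤ (i:ℕ) then (1:ℝ) else 0) * lam i
      rw [if_neg h, zero_mul]
  have hχsum : ∑ i, χ i = (j : ℝ) := chi_sum' hj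
  rw [hfil]
  rcases Nat.eq_zero_or_pos j with hj0 | hj1
  · subst hj0
    have : ∀ i ∈ Finset.univ, u i = 0 := by
      rw [← Finset.sum_eq_zero_iff_of_nonneg (fun i _ => h0 i)]
      simpa using hsum
    have hu0 : ∀ i : Fin n, u i = 0 := fun i => this i (Finset.mem_univ i)
    have hc0 : ∀ i : Fin n, χ i = 0 := by
      intro i
      exact if_neg (by omega)
    simp [hu0, hc0]
  · have hn : 0 < n := lt_of_lt_of_le hj1 hj
    have hm : n - j < n := by omega
    set m : Fin n := ⟨n - j, hm⟩ with hmdef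
    set c : ℝ := lam m with hc
    have hterm : ∀ i : Fin n, 0 ≤ (u i - χ i) * (lam i - c) := by
      intro i
      by_cases h : n - j ≤ (i : ℕ)
      · have hχi : χ i = 1 := if_pos h
        have hle : lam i ≤ c := hdec m i (by rw [Fin.le_def]; exact h)
        rw [hχi]
        nlinarith [h1 i]
      · have hχi : χ i = 0 := if_neg h
        have hge : c ≤ lam i := hdec i m (by rw [Fin.le_def]; show (i:ℕ) ≤ n - j; omega)
        rw [hχi]
        nlinarith [h0 i]
    have hsum0 : 0 ≤ ∑ i, (u i - χ i) * (lam i - c) :=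
      Finset.sum_nonneg fun i _ => hterm i
    have hexp : ∑ i, (u i - χ i) * (lam i - c)
        = (∑ i, u i * lam i) - (∑ i, χ i * lam i) - c * ((∑ i, u i) - (∑ i, χ i)) := by
      have hr : ∀ i : Fin n, (u i - χ i) * (lam i - c)
          = (u i * lam i - χ i * lam i) - (c * u i - c * χ i) := fun i => by ring
      rw [Finset.sum_congr rfl (fun i _ => hr i), Finset.sum_sub_distrib,
        Finset.sum_sub_distrib, Finset.sum_sub_distrib, ← Finset.mul_sum, ← Finset.mul_sum]
      ring
    rw [hexp, hsum, hχsum] at hsum0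
    linarith

private lemma diag_nonneg'' {n : ℕ} {M : Matrix (Fin n) (Fin n) ℝ} (hM : M.PosSemidef)
    (i : Fin n) : 0 ≤ M i i := by
  exact hM.diag_nonneg

/-- Let `X` be a real symmetric `n × n` matrix with eigenvalues
`lam 0 ≥ lam 1 ≥ ... ≥ lam (n-1)` (listed in decreasing order with multiplicity), and let
`0 ≤ j ≤ n`. The infimum of `tr (U X)` over all real symmetric `n × n` matrices `U` with
`U ⪰ 0`, `I_n − U ⪰ 0` and `tr U = j` equals the sum of the `j` smallest eigenvalues of
`X`, i.e. `lam (n-j) + ... + lam (n-1)`. -/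
theorem stmt12 {n : ℕ} (X : Matrix (Fin n) (Fin n) ℝ) (hX : X.IsHermitian)
    (lam : Fin n → ℝ)
    (hdec : ∀ i j : Fin n, i ≤ j → lam j ≤ lam i)
    (heig : ∃ σ : Equiv.Perm (Fin n), lam = hX.eigenvalues ∘ σ)
    (j : ℕ) (hj : j ≤ n) :
    sInf {t : ℝ | ∃ U : Matrix (Fin n) (Fin n) ℝ, U.IsSymm ∧ U.PosSemidef ∧
        ((1 : Matrix (Fin n) (Fin n) ℝ) - U).PosSemidef ∧
        U.trace = (j : ℝ) ∧ t = (U * X).trace} =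
      ∑ i ∈ Finset.univ.filter (fun i : Fin n => n - j ≤ (i : ℕ)), lam i := by
  obtain ⟨σ, hlam⟩ := heig
  set V : Matrix (Fin n) (Fin n) ℝ := (hX.eigenvectorUnitary : Matrix (Fin n) (Fin n) ℝ) with hVdef
  set d : Fin n → ℝ := hX.eigenvalues with hddef
  have hV1 : star V * V = 1 := hX.eigenvectorUnitary.2.1
  have hV2 : V * star V = 1 := hX.eigenvectorUnitary.2.2
  have hXd : X = V * diagonal d * star V := by
    have := hX.spectral_theorem
    simpa [RCLike.ofReal_real_eq_id, Function.comp] using this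
  set t₀ : ℝ := ∑ i ∈ Finset.univ.filter (fun i : Fin n => n - j ≤ (i : ℕ)), lam i with ht₀
  -- trace formula
  have htrd : ∀ W : Matrix (Fin n) (Fin n) ℝ, (W * diagonal d).trace = ∑ i, W i i * d i := by
    intro W
    simp [Matrix.trace, Matrix.diag, Matrix.mul_diagonal]
  -- lower bound
  have hlb : ∀ t ∈ {t : ℝ | ∃ U : Matrix (Fin n) (Fin n) ℝ, U.IsSymm ∧ U.PosSemidef ∧
        ((1 : Matrix (Fin n) (Fin n) ℝ) - U).PosSemidef ∧
        U.trace = (j : ℝ) ∧ t = (U * X).trace}, t₀ ≤ t := by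
    rintro t ⟨U, -, hU, hIU, htr, rfl⟩
    set W : Matrix (Fin n) (Fin n) ℝ := Vᴴ * U * V with hWdef
    have hW : W.PosSemidef := hU.conjTranspose_mul_mul_same V
    have hW1 : ((1 : Matrix (Fin n) (Fin n) ℝ) - W).PosSemidef := by
      have h := hIU.conjTranspose_mul_mul_same V
      have : Vᴴ * (1 - U) * V = 1 - W := by
        rw [Matrix.mul_sub, Matrix.mul_one, Matrix.sub_mul, hWdef, ← Matrix.star_eq_conjTranspose,
          hV1]
      rwa [this] at h
    have htrW : W.trace = (j : ℝ) := by
      rw [hWdef, Matrix.trace_mul_comm (Vᴴ * U) V, ← Matrix.mul_assoc,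
        ← Matrix.star_eq_conjTranspose, hV2, Matrix.one_mul, htr]
    have htUX : (U * X).trace = (W * diagonal d).trace := by
      rw [hXd, hWdef]
      rw [← Matrix.mul_assoc, ← Matrix.mul_assoc, Matrix.trace_mul_comm (U * V * diagonal d) (star V)]
      rw [← Matrix.star_eq_conjTranspose, ← Matrix.mul_assoc, ← Matrix.mul_assoc]
    rw [htUX, htrd W]
    have hre : ∑ i, W i i * d i = ∑ i, W (σ i) (σ i) * d (σ i) :=
      (Equiv.sum_comp σ (fun k => W k k * d k)).symm
    rw [hre]
    have hdl : ∀ i : Fin n, d (σ i) = lam i := fun i => by rw [hlam]; rfl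
    have : ∑ i, W (σ i) (σ i) * d (σ i) = ∑ i, (fun i => W (σ i) (σ i)) i * lam i := by
      refine Finset.sum_congr rfl fun i _ => by rw [hdl i]
    rw [this]
    refine key_sum' hj lam hdec _ (fun i => diag_nonneg'' hW (σ i)) (fun i => ?_) ?_
    · have h := diag_nonneg'' hW1 (σ i)
      simp only [Matrix.sub_apply, Matrix.one_apply_eq] at h
      linarith
    · have : ∑ i, W (σ i) (σ i) = ∑ k, W k k := Equiv.sum_comp σ (fun k => W k k)
      rw [this]
      have htr' : ∑ k, W k k = W.trace := by simp [Matrix.trace, Matrix.diag]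
      rw [htr', htrW]
  -- membership
  have hmem : t₀ ∈ {t : ℝ | ∃ U : Matrix (Fin n) (Fin n) ℝ, U.IsSymm ∧ U.PosSemidef ∧
        ((1 : Matrix (Fin n) (Fin n) ℝ) - U).PosSemidef ∧
        U.trace = (j : ℝ) ∧ t = (U * X).trace} := by
    set u : Fin n → ℝ := fun k => if n - j ≤ ((σ.symm k : Fin n) : ℕ) then 1 else 0 with hudef
    have hu0 : ∀ k, 0 ≤ u k := fun k => by rw [hudef]; positivity
    have hu1 : ∀ k, u k ≤ 1 := fun k => by
      rw [hudef]; dsimp only; split <;> norm_num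
    refine ⟨V * diagonal u * Vᴴ, ?_, ?_, ?_, ?_, ?_⟩
    · have hps : (V * diagonal u * Vᴴ).PosSemidef :=
        (Matrix.PosSemidef.diagonal (fun k => hu0 k)).mul_mul_conjTranspose_same V
      have := hps.1
      rwa [Matrix.IsHermitian, conjTranspose_eq_transpose_of_trivial] at this
    · exact (Matrix.PosSemidef.diagonal (fun k => hu0 k)).mul_mul_conjTranspose_same V
    · have heq : (1 : Matrix (Fin n) (Fin n) ℝ) - V * diagonal u * Vᴴ
          = V * diagonal (fun k => 1 - u k) * Vᴴ := by
        have : diagonal (fun k => (1:ℝ) - u k) = 1 - diagonal u := by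
          rw [← Matrix.diagonal_one, ← Matrix.diagonal_sub]
        rw [this, Matrix.mul_sub, Matrix.mul_one, Matrix.sub_mul,
          ← Matrix.star_eq_conjTranspose, hV2]
      rw [heq]
      exact (Matrix.PosSemidef.diagonal (fun k => by have := hu1 k; simp only [Pi.zero_apply]; linarith)).mul_mul_conjTranspose_same V
    · rw [Matrix.trace_mul_comm (V * diagonal u) Vᴴ, ← Matrix.mul_assoc,
        ← Matrix.star_eq_conjTranspose, hV1, Matrix.one_mul, Matrix.trace_diagonal]
      have : ∑ k, u k = ∑ i, u (σ i) := (Equiv.sum_comp σ u).symm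
      rw [this]
      have : ∀ i : Fin n, u (σ i) = if n - j ≤ (i : ℕ) then (1:ℝ) else 0 := fun i => by
        rw [hudef]; simp
      rw [Finset.sum_congr rfl fun i _ => this i]
      exact chi_sum' hj
    · rw [hXd]
      have hmul : V * diagonal u * Vᴴ * (V * diagonal d * star V)
          = V * (diagonal u * diagonal d) * star V := by
        rw [← Matrix.star_eq_conjTranspose]
        calc V * diagonal u * star V * (V * diagonal d * star V)
            = V * diagonal u * (star V * V) * diagonal d * star V := by
              simp only [Matrix.mul_assoc]
          _ = V * (diagonal u * diagonal d) * star V := by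
              rw [hV1, Matrix.mul_one]; simp only [Matrix.mul_assoc]
      rw [hmul, Matrix.trace_mul_comm (V * (diagonal u * diagonal d)) (star V),
        ← Matrix.mul_assoc, hV1, Matrix.one_mul, Matrix.diagonal_mul_diagonal,
        Matrix.trace_diagonal]
      have h1 : ∑ k, u k * d k = ∑ i, u (σ i) * d (σ i) :=
        (Equiv.sum_comp σ (fun k => u k * d k)).symm
      rw [h1]
      have h2 : ∀ i : Fin n, u (σ i) * d (σ i) = if n - j ≤ (i : ℕ) then lam i else 0 := by
        intro i
        have hdl : d (σ i) = lam i := by rw [hlam]; rfl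
        rw [hudef, hdl]
        simp only [Equiv.symm_apply_apply]
        split <;> simp
      rw [Finset.sum_congr rfl fun i _ => h2 i, ← Finset.sum_filter]
  exact le_antisymm (csInf_le ⟨t₀, hlb⟩ hmem) (le_csInf ⟨t₀, hmem⟩ hlb)
end

section
/- Let X be a real symmetric positive semidefinite n×n matrix and let k ≤ n. Then rank(X) ≤ k if and only if there exists a real symmetric n×n matrix U with U ⪰ 0, I_n − U ⪰ 0, tr(U) = n − k, and tr(U X) = 0. -/
open Matrix

private lemma trace_sq_zero {n : ℕ} {A : Matrix (Fin n) (Fin n) ℝ}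
    (h : (Aᴴ * A).trace = 0) : A = 0 := by
  have h' : ∑ j, ∑ i, A i j * A i j = 0 := by
    simpa [Matrix.trace, Matrix.mul_apply, Matrix.diag, Matrix.conjTranspose_apply] using h
  ext i j
  have h1 : ∀ j ∈ Finset.univ, (0:ℝ) ≤ ∑ i, A i j * A i j :=
    fun j _ => Finset.sum_nonneg fun i _ => mul_self_nonneg _
  have h2 : ∑ i, A i j * A i j = 0 :=
    (Finset.sum_eq_zero_iff_of_nonneg h1).mp h' j (Finset.mem_univ j)
  have h3 : A i j * A i j = 0 :=
    (Finset.sum_eq_zero_iff_of_nonneg (fun i _ => mul_self_nonneg (A i j))).mp h2 i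
      (Finset.mem_univ i)
  simpa using mul_self_eq_zero.mp h3

private lemma trace_eq_sum_eigs {n : ℕ} {A : Matrix (Fin n) (Fin n) ℝ}
    (hA : A.IsHermitian) : A.trace = ∑ i, hA.eigenvalues i := by
  nth_rewrite 1 [hA.spectral_theorem, Unitary.conjStarAlgAut_apply]
  rw [Matrix.trace_mul_cycle]
  rw [show (star (hA.eigenvectorUnitary : Matrix (Fin n) (Fin n) ℝ)) *
      (hA.eigenvectorUnitary : Matrix (Fin n) (Fin n) ℝ) = 1 from
    Unitary.coe_star_mul_self _]
  simp [Matrix.trace_diagonal, RCLike.ofReal_real_eq_id]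

private lemma eig_le_one {n : ℕ} {U : Matrix (Fin n) (Fin n) ℝ} (hU : U.PosSemidef)
    (hIU : ((1 : Matrix (Fin n) (Fin n) ℝ) - U).PosSemidef) (i : Fin n) :
    hU.1.eigenvalues i ≤ 1 := by
  set v : Fin n → ℝ := ⇑(hU.1.eigenvectorBasis i) with hv
  have hnorm : ‖hU.1.eigenvectorBasis i‖ = 1 := hU.1.eigenvectorBasis.orthonormal.1 i
  have hvv : v ⬝ᵥ v = 1 := by
    have h0 : (inner ℝ (hU.1.eigenvectorBasis i) (hU.1.eigenvectorBasis i) : ℝ) = 1 := by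
      rw [real_inner_self_eq_norm_sq, hnorm]; norm_num
    rw [PiLp.inner_apply] at h0
    simpa [dotProduct, hv, ← pow_two] using h0
  have h2 := hIU.dotProduct_mulVec_nonneg v
  have hmul : ((1 : Matrix (Fin n) (Fin n) ℝ) - U) *ᵥ v =
      v - hU.1.eigenvalues i • v := by
    rw [Matrix.sub_mulVec, Matrix.one_mulVec, hU.1.mulVec_eigenvectorBasis]
  rw [hmul] at h2
  have : (0:ℝ) ≤ 1 - hU.1.eigenvalues i := by
    have := h2
    simp only [star_trivial, dotProduct_sub, dotProduct_smul, smul_eq_mul, hvv] at this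
    linarith
  linarith

/-- Let `X` be a real symmetric positive semidefinite `n × n` matrix and
`k ≤ n`. Then `rank X ≤ k` if and only if there exists a real symmetric `n × n` matrix `U`
with `U ⪰ 0`, `I_n − U ⪰ 0`, `tr U = n − k` and `tr (U X) = 0`. -/
theorem stmt13 {n : ℕ} (X : Matrix (Fin n) (Fin n) ℝ) (hX : X.PosSemidef)
    (k : ℕ) (hk : k ≤ n) :
    X.rank ≤ k ↔
      ∃ U : Matrix (Fin n) (Fin n) ℝ, U.IsSymm ∧ U.PosSemidef ∧
        ((1 : Matrix (Fin n) (Fin n) ℝ) - U).PosSemidef ∧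
        U.trace = ((n - k : ℕ) : ℝ) ∧ (U * X).trace = 0 := by
  constructor
  · intro hrank
    set h1 := hX.1 with hh1
    set V : Matrix (Fin n) (Fin n) ℝ := (h1.eigenvectorUnitary : Matrix (Fin n) (Fin n) ℝ)
      with hVdef
    have hV1 : star V * V = 1 := Unitary.coe_star_mul_self _
    have hV2 : V * star V = 1 := Unitary.coe_mul_star_self _
    have hXdec : X = V * diagonal h1.eigenvalues * star V := by
      have := h1.spectral_theorem
      simpa [RCLike.ofReal_real_eq_id] using this
    -- choose S ⊆ zero-eigenvalue indices with card n - k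
    set Z : Finset (Fin n) := Finset.univ.filter (fun i => h1.eigenvalues i = 0) with hZ
    have hcard : X.rank = (Finset.univ.filter (fun i => h1.eigenvalues i ≠ 0)).card := by
      rw [h1.rank_eq_card_non_zero_eigs, Fintype.card_subtype]
    have hZcard : Z.card = n - X.rank := by
      have hsplit := Finset.card_filter_add_card_filter_not
        (s := (Finset.univ : Finset (Fin n))) (p := fun i => h1.eigenvalues i = 0)
      simp only [Finset.card_univ, Fintype.card_fin] at hsplit
      have e1 : (Finset.univ.filter (fun i => ¬ h1.eigenvalues i = 0)).card = X.rank := by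
        rw [hcard]
      have e2 : Z.card = (Finset.univ.filter (fun i => h1.eigenvalues i = 0)).card := by
        rw [hZ]
      omega
    have hZk : n - k ≤ Z.card := by omega
    obtain ⟨S, hSZ, hScard⟩ := Finset.exists_subset_card_eq hZk
    set d : Fin n → ℝ := fun i => if i ∈ S then 1 else 0 with hd
    refine ⟨V * diagonal d * star V, ?_, ?_, ?_, ?_, ?_⟩
    · -- IsSymm
      have hherm : (V * diagonal d * star V).IsHermitian := by
        rw [Matrix.star_eq_conjTranspose]
        exact Matrix.isHermitian_mul_mul_conjTranspose V (Matrix.isHermitian_diagonal _)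
      ext i j
      have := congrFun (congrFun hherm i) j
      simpa [Matrix.conjTranspose_apply, Matrix.transpose_apply] using this
    · -- PosSemidef
      have hdnn : (0 : Fin n → ℝ) ≤ d := by
        intro i; by_cases h : i ∈ S <;> simp [hd, h]
      have := (Matrix.PosSemidef.diagonal hdnn).mul_mul_conjTranspose_same V
      simpa [Matrix.star_eq_conjTranspose] using this
    · -- 1 - U PSD
      have heq : (1 : Matrix (Fin n) (Fin n) ℝ) - V * diagonal d * star V =
          V * diagonal (fun i => 1 - d i) * star V := by
        have : diagonal (fun i => 1 - d i) =
            (1 : Matrix (Fin n) (Fin n) ℝ) - diagonal d := by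
          rw [← Matrix.diagonal_one, ← Matrix.diagonal_sub]
        rw [this, Matrix.mul_sub, Matrix.mul_one, Matrix.sub_mul, hV2]
      rw [heq]
      have hdnn : (0 : Fin n → ℝ) ≤ fun i => 1 - d i := by
        intro i; by_cases h : i ∈ S <;> simp [hd, h]
      have := (Matrix.PosSemidef.diagonal hdnn).mul_mul_conjTranspose_same V
      simpa [Matrix.star_eq_conjTranspose] using this
    · -- trace
      rw [Matrix.trace_mul_cycle, hV1, Matrix.one_mul, Matrix.trace_diagonal]
      have : ∑ i, d i = (S.card : ℝ) := by
        simp [hd, Finset.sum_ite_mem]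
      rw [this, hScard]
    · -- trace (U X) = 0
      have hUX : (V * diagonal d * star V) * X =
          V * (diagonal d * diagonal h1.eigenvalues) * star V := by
        conv_lhs => rw [hXdec]
        simp only [Matrix.mul_assoc]
        rw [← Matrix.mul_assoc (star V) V, hV1, Matrix.one_mul]
      rw [hUX, Matrix.trace_mul_cycle, hV1, Matrix.one_mul,
        Matrix.diagonal_mul_diagonal, Matrix.trace_diagonal]
      apply Finset.sum_eq_zero
      intro i _
      by_cases h : i ∈ S
      · have hiZ : i ∈ Z := hSZ h
        have : h1.eigenvalues i = 0 := by
          simpa [hZ] using hiZ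
        simp [hd, h, this]
      · simp [hd, h]
  · rintro ⟨U, _hsymm, hU, hIU, htr, htrUX⟩
    obtain ⟨S, hSH, hSmul⟩ : ∃ S : Matrix (Fin n) (Fin n) ℝ, Sᴴ = S ∧ S * S = X := by
      open scoped MatrixOrder in
      exact ⟨CFC.sqrt X, (CFC.sqrt_nonneg X).posSemidef.1, CFC.sqrt_mul_sqrt_self X hX.nonneg⟩
    obtain ⟨T, hTH, hTmul⟩ : ∃ T : Matrix (Fin n) (Fin n) ℝ, Tᴴ = T ∧ T * T = U := by
      open scoped MatrixOrder in
      exact ⟨CFC.sqrt U, (CFC.sqrt_nonneg U).posSemidef.1, CFC.sqrt_mul_sqrt_self U hU.nonneg⟩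
    have hkey : ((S * T)ᴴ * (S * T)).trace = 0 := by
      have : ((S * T)ᴴ * (S * T)).trace = (U * X).trace := by
        calc ((S * T)ᴴ * (S * T)).trace = ((T * S) * (S * T)).trace := by
              rw [Matrix.conjTranspose_mul, hSH, hTH]
          _ = ((T * (S * S)) * T).trace := by simp [Matrix.mul_assoc]
          _ = (T * (T * (S * S))).trace := trace_mul_comm _ _
          _ = ((T * T) * (S * S)).trace := by rw [Matrix.mul_assoc]
          _ = (U * X).trace := by rw [hSmul, hTmul]
      rw [this, htrUX]
    have hST : S * T = 0 := trace_sq_zero hkey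
    have hTS : T * S = 0 := by
      rw [← hTH, ← hSH, ← Matrix.conjTranspose_mul, hST, Matrix.conjTranspose_zero]
    have hUX0 : U * X = 0 := by
      calc U * X = T * (T * S) * S := by rw [← hSmul, ← hTmul]; simp [Matrix.mul_assoc]
        _ = 0 := by rw [hTS, Matrix.mul_zero, Matrix.zero_mul]
    have hrk : U.rank + X.rank ≤ n := by
      simpa using Matrix.rank_add_rank_le_card_of_mul_eq_zero hUX0
    have hUrank : n - k ≤ U.rank := by
      have hsum : ∑ i, hU.1.eigenvalues i = ((n - k : ℕ) : ℝ) := by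
        rw [← trace_eq_sum_eigs hU.1, htr]
      have hle : ∑ i, hU.1.eigenvalues i ≤
          ((Finset.univ.filter (fun i => hU.1.eigenvalues i ≠ 0)).card : ℝ) := by
        rw [← Finset.sum_filter_ne_zero Finset.univ]
        calc ∑ i ∈ Finset.univ.filter (fun i => hU.1.eigenvalues i ≠ 0), hU.1.eigenvalues i
            ≤ ∑ _i ∈ Finset.univ.filter (fun i => hU.1.eigenvalues i ≠ 0), (1:ℝ) :=
              Finset.sum_le_sum fun i _ => eig_le_one hU hIU i
          _ = _ := by simp
      have hrU : U.rank = (Finset.univ.filter (fun i => hU.1.eigenvalues i ≠ 0)).card := by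
        rw [hU.1.rank_eq_card_non_zero_eigs, Fintype.card_subtype]
      have : ((n - k : ℕ) : ℝ) ≤ (U.rank : ℝ) := by
        rw [hrU]; rw [hsum] at hle; exact_mod_cast hle
      exact_mod_cast this
    omega
end
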